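/- Let x ∈ s, let v* ∈ s be a minimizer over s of v ↦ ⟨∇f(x), v⟩ + g(v), and set d := v* − x. Then F(x + t d) ≤ F(x) − t G(x) + o(t) as t → 0+; precisely, for every ε > 0 there exists δ ∈ (0, 1] such that F(x + t d) ≤ F(x) − t G(x) + ε t for all t ∈ (0, δ]. -/

import Mathlib

open scoped RealInnerProductSpace

/-- The Frank–Wolfe gap `G(x) = sup_{v ∈ s} (⟪∇f(x), x − v⟫ + g(x) − g(v))`. -/
noncomputable def FWgap {E : Type*} [NormedAddCommGroup E] [InnerProductSpace ℝ E] [CompleteSpace E]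
    (f g : E → ℝ) (s : Set E) (x : E) : ℝ :=
  ⨆ v : s, (⟪gradient f x, x - (v : E)⟫ + g x - g (v : E))


/-- **Lemma: descent property.** Let `x ∈ s`, let `v* ∈ s` minimize
`v ↦ ⟪∇f(x), v⟫ + g v` over `s`, and set `d := v* − x`. Then
`F(x + t d) ≤ F(x) − t G(x) + o(t)` as `t → 0+`: for every `ε > 0` there exists
`δ ∈ (0, 1]` with `F(x + t d) ≤ F(x) − t G(x) + ε t` for all `t ∈ (0, δ]`. -/
theorem descent_property
    {E : Type*} [NormedAddCommGroup E] [InnerProductSpace ℝ E] [FiniteDimensional ℝ E]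
    (s : Set E) (hs_ne : s.Nonempty) (hs_cl : IsClosed s) (hs_cv : Convex ℝ s)
    (g : E → ℝ) (hg_cv : ConvexOn ℝ s g) (hg_lsc : LowerSemicontinuousOn g s)
    (hg_sc : ∀ M : ℝ, ∃ R : ℝ, ∀ z ∈ s, R ≤ ‖z‖ → M ≤ g z / ‖z‖)
    (f : E → ℝ) (hf : ∃ u : Set E, IsOpen u ∧ s ⊆ u ∧ ContDiffOn ℝ 1 f u)
    (hF_bdd : BddBelow ((fun z => f z + g z) '' s))
    (x : E) (hx : x ∈ s)
    (vstar : E) (hvstar : vstar ∈ s)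
    (hmin : ∀ w ∈ s, ⟪gradient f x, vstar⟫ + g vstar ≤ ⟪gradient f x, w⟫ + g w)
    (d : E) (hd : d = vstar - x) :
    ∀ ε > (0 : ℝ), ∃ δ ∈ Set.Ioc (0 : ℝ) 1, ∀ t ∈ Set.Ioc (0 : ℝ) δ,
      f (x + t • d) + g (x + t • d) ≤ (f x + g x) - t * FWgap f g s x + ε * t := by
  intro ε hε
  haveI : Nonempty s := ⟨⟨x, hx⟩⟩
  obtain ⟨u, hu_open, hsu, hcd⟩ := hf
  have hxu : x ∈ u := hsu hx
  have hdiff : DifferentiableAt ℝ f x :=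
    (hcd.differentiableOn one_ne_zero).differentiableAt (hu_open.mem_nhds hxu)
  have hgrad : HasGradientAt f (gradient f x) x := hdiff.hasGradientAt
  -- FWgap is attained at vstar
  have key : ∀ v ∈ s, ⟪gradient f x, x - v⟫ + g x - g v
      ≤ ⟪gradient f x, x - vstar⟫ + g x - g vstar := by
    intro v hv
    have h := hmin v hv
    simp only [inner_sub_right] at *
    linarith
  have hGap : FWgap f g s x = ⟪gradient f x, x - vstar⟫ + g x - g vstar := by
    apply le_antisymm
    · exact ciSup_le fun v => key v.1 v.2
    · exact le_ciSup ⟨_, Set.forall_mem_range.2 fun v => key v.1 v.2⟩ (⟨vstar, hvstar⟩ : s)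
  -- little-o estimate along the segment
  have hlo := hasGradientAt_iff_isLittleO.mp hgrad
  have htend : Filter.Tendsto (fun t : ℝ => x + t • d) (nhds 0) (nhds x) := by
    have hc : Continuous (fun t : ℝ => x + t • d) := by continuity
    simpa using hc.tendsto 0
  have hlo2 := hlo.comp_tendsto htend
  simp only [Function.comp_def, add_sub_cancel_left] at hlo2
  have hO : (fun t : ℝ => t • d) =O[nhds 0] (fun t : ℝ => t) := by
    apply Asymptotics.isBigO_iff.mpr
    refine ⟨‖d‖, Filter.Eventually.of_forall fun t => ?_⟩
    rw [norm_smul]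
    simp [mul_comm]
  have hlo3 : (fun t : ℝ => f (x + t • d) - f x - ⟪gradient f x, t • d⟫)
      =o[nhds 0] (fun t : ℝ => t) := hlo2.trans_isBigO hO
  have hev := hlo3.def hε
  obtain ⟨δ₀, hδ₀, hball⟩ := Metric.eventually_nhds_iff.mp hev
  refine ⟨min (δ₀ / 2) 1, ⟨lt_min (by linarith) one_pos, min_le_right _ _⟩, ?_⟩
  intro t ht
  obtain ⟨ht0, htle⟩ := ht
  have ht1 : t ≤ 1 := htle.trans (min_le_right _ _)
  have htδ : dist t 0 < δ₀ := by
    rw [Real.dist_eq, sub_zero, abs_of_pos ht0]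
    have := htle.trans (min_le_left _ _)
    linarith
  have hest := hball htδ
  rw [Real.norm_eq_abs, Real.norm_eq_abs, abs_of_pos ht0] at hest
  have hfineq : f (x + t • d) ≤ f x + t * ⟪gradient f x, d⟫ + ε * t := by
    have h1 : f (x + t • d) - f x - ⟪gradient f x, t • d⟫ ≤ ε * t :=
      (le_abs_self _).trans hest
    rw [real_inner_smul_right] at h1
    linarith
  have hgineq : g (x + t • d) ≤ (1 - t) * g x + t * g vstar := by
    have hcomb := hg_cv.2 hx hvstar (by linarith : (0:ℝ) ≤ 1 - t) (le_of_lt ht0)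
      (by ring : (1 - t) + t = 1)
    have heq : (1 - t) • x + t • vstar = x + t • d := by
      rw [hd]; module
    rwa [heq] at hcomb
    -- smul_eq_mul
  have hinner : ⟪gradient f x, x - vstar⟫ = -⟪gradient f x, d⟫ := by
    rw [hd, inner_sub_right, inner_sub_right]; ring
  rw [hGap, hinner]
  nlinarith [hfineq, hgineq]
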